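/- arXiv:2401.06623 — 4 statements merged into one kernel-verified Lean document; each statement's English description precedes it below -/
import Mathlib

section
/- Let a ∈ (−1,1). Let w be a continuous function on the closed half-space {(x,y) : y ≥ 0} which is C² on ℝ₊^{n+1} and satisfies y·Δw(z) + a·∂_y w(z) = 0 for every z ∈ ℝ₊^{n+1} (equivalently, div(y^a ∇w) = 0), together with w(x,0) = 0 for every x ∈ ℝⁿ. Suppose that for some constants C > 0 and d ∈ [0, 1−a) one has |w(z)| ≤ C(1 + |z|^d) for every z. Then w is identically zero. -/
open MeasureTheory Filter Set Topology
open scoped ENNReal NNReal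

noncomputable section

/-- The Euclidean space `ℝ^{n+1}`. -/
abbrev E (n : ℕ) := EuclideanSpace ℝ (Fin (n + 1))

/-- The last coordinate `y` of a point `z = (x, y) ∈ ℝ^{n+1}`. -/
def ycoord {n : ℕ} (z : E n) : ℝ := z (Fin.last n)

/-- The open upper half-space `ℝ₊^{n+1}`. -/
def upperHalf (n : ℕ) : Set (E n) := {z | 0 < ycoord z}

/-- The open upper half-ball `B_r⁺`. -/
def Bplus (n : ℕ) (r : ℝ) : Set (E n) := {z | 0 < ycoord z ∧ ‖z‖ < r}

/-- The upper hemisphere `(∂B_r)⁺`. -/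
def sphPlus (n : ℕ) (r : ℝ) : Set (E n) := {z | 0 < ycoord z ∧ ‖z‖ = r}

/-- The point `(x, y) ∈ ℝ^{n+1}` built from `x ∈ ℝⁿ` and `y ∈ ℝ`. -/
def pt {n : ℕ} (x : EuclideanSpace ℝ (Fin n)) (y : ℝ) : E n :=
  (EuclideanSpace.equiv (Fin (n + 1)) ℝ).symm (Fin.snoc (fun i => x i) y)

/-- The unit vector `e_{n+1}` in the `y`-direction. -/
def eY (n : ℕ) : E n := EuclideanSpace.single (Fin.last n) (1 : ℝ)

/-- The partial derivative `∂_y u` in the `y`-direction. -/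
def partialY {n : ℕ} (u : E n → ℝ) (z : E n) : ℝ := fderiv ℝ u z (eY n)

/-- The Euclidean Laplacian `Δu = ∑ ∂²u/∂z_i²`. -/
def lap {n : ℕ} (u : E n → ℝ) (z : E n) : ℝ :=
  ∑ i : Fin (n + 1),
    fderiv ℝ (fun w => fderiv ℝ u w (EuclideanSpace.single i (1 : ℝ))) z
      (EuclideanSpace.single i (1 : ℝ))

/-- A C¹ function with compact support contained in `{z : ‖z‖ ≤ r, y > 0}`. -/
def IsTestFn (n : ℕ) (r : ℝ) (φ : E n → ℝ) : Prop :=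
  ContDiff ℝ 1 φ ∧ tsupport φ ⊆ {z : E n | ‖z‖ ≤ r ∧ 0 < ycoord z}

/-- The `y^a`-weighted Sobolev energy `∫_{B_r⁺} (|∇u|² + u²) y^a dz`. -/
def wInt (n : ℕ) (a : ℝ) (u : E n → ℝ) (r : ℝ) : ℝ≥0∞ :=
  ∫⁻ z in Bplus n r, ENNReal.ofReal ((‖gradient u z‖ ^ 2 + (u z) ^ 2) * (ycoord z) ^ a)

/-- Membership in `H^{1,a}(ℝ₊^{n+1})`: locally finite weighted Sobolev norm. -/
def memH1 (n : ℕ) (a : ℝ) (u : E n → ℝ) : Prop := ∀ r > 0, wInt n a u r < ⊤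

/-- Membership in `H̃^{1,a}(ℝ₊^{n+1})`: finite local weighted norm together with
approximability by C¹ functions compactly supported away from the boundary. -/
def memH1T (n : ℕ) (a : ℝ) (u : E n → ℝ) : Prop :=
  memH1 n a u ∧ ∀ r > 0, ∃ φ : ℕ → E n → ℝ, (∀ k, IsTestFn n r (φ k)) ∧
    Tendsto (fun k => wInt n a (fun z => u z - φ k z) r) atTop (nhds 0)


namespace LiouAux
variable {n : ℕ}


def YL (n : ℕ) : E n →L[ℝ] ℝ := EuclideanSpace.proj (Fin.last n)

lemma YL_apply (z : E n) : YL n z = ycoord z := rfl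

lemma YL_single (i : Fin (n+1)) :
    YL n (EuclideanSpace.single i (1:ℝ)) = if i = Fin.last n then 1 else 0 := by
  simp [YL, EuclideanSpace.single_apply, eq_comm]

lemma proj_single (i j : Fin (n+1)) :
    (EuclideanSpace.proj j : E n →L[ℝ] ℝ) (EuclideanSpace.single i (1:ℝ))
      = if i = j then 1 else 0 := by
  simp [EuclideanSpace.single_apply, eq_comm]

lemma ycoord_continuous : Continuous (fun z : E n => ycoord z) := (YL n).continuous

lemma isOpen_upperHalf : IsOpen (upperHalf n) :=
  isOpen_lt continuous_const ycoord_continuous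

lemma isOpen_Bplus (r : ℝ) : IsOpen (Bplus n r) := by
  have h1 : IsOpen {z : E n | 0 < ycoord z} := isOpen_upperHalf
  have h2 : IsOpen {z : E n | ‖z‖ < r} := isOpen_lt continuous_norm continuous_const
  exact h1.inter h2

lemma abs_ycoord_le_norm (z : E n) : |ycoord z| ≤ ‖z‖ := by
  have := EuclideanSpace.norm_eq z
  have h1 : (ycoord z)^2 ≤ ∑ i, ‖z i‖^2 := by
    have : |ycoord z|^2 ≤ ∑ i, ‖z i‖^2 :=
      Finset.single_le_sum (f := fun i => ‖z i‖^2) (fun i _ => by positivity)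
        (Finset.mem_univ (Fin.last n))
    simpa [sq_abs] using this
  have h2 : |ycoord z| = Real.sqrt ((ycoord z)^2) := (Real.sqrt_sq_eq_abs _).symm
  rw [h2, this]
  exact Real.sqrt_le_sqrt h1

lemma sum_sq_eq_norm_sq (z : E n) : ∑ i, (z i)^2 = ‖z‖^2 := by
  rw [EuclideanSpace.norm_eq]
  rw [Real.sq_sqrt (by positivity)]
  simp [sq_abs]

lemma diffAt_fderiv_apply {u : E n → ℝ} {z : E n} (hu : ContDiffAt ℝ 2 u z) (v0 : E n) :
    DifferentiableAt ℝ (fun x => fderiv ℝ u x v0) z := by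
  have h1 : ContDiffAt ℝ 1 (fderiv ℝ u) z := hu.fderiv_right (by norm_num)
  exact ((ContinuousLinearMap.apply ℝ ℝ v0).differentiableAt).comp z (h1.differentiableAt (by norm_num))

lemma lap_add {u g : E n → ℝ} {z : E n} (hu : ContDiffAt ℝ 2 u z) (hg : ContDiffAt ℝ 2 g z) :
    lap (fun x => u x + g x) z = lap u z + lap g z := by
  unfold lap
  rw [← Finset.sum_add_distrib]
  refine Finset.sum_congr rfl fun i _ => ?_
  set e := EuclideanSpace.single i (1:ℝ) with he
  have hev : (fun x => fderiv ℝ (fun y => u y + g y) x e)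
      =ᶠ[𝓝 z] fun x => fderiv ℝ u x e + fderiv ℝ g x e := by
    filter_upwards [hu.eventually (by simp), hg.eventually (by simp)] with x hux hgx
    rw [fderiv_fun_add (hux.differentiableAt (by norm_num)) (hgx.differentiableAt (by norm_num))]
    rfl
  rw [hev.fderiv_eq, fderiv_fun_add (diffAt_fderiv_apply hu e) (diffAt_fderiv_apply hg e)]
  rfl

lemma partialY_add {u g : E n → ℝ} {z : E n} (hu : DifferentiableAt ℝ u z)
    (hg : DifferentiableAt ℝ g z) :
    partialY (fun x => u x + g x) z = partialY u z + partialY g z := by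
  unfold partialY
  rw [fderiv_fun_add hu hg]; rfl

lemma lap_neg (u : E n → ℝ) (z : E n) : lap (fun x => -u x) z = - lap u z := by
  unfold lap
  rw [← Finset.sum_neg_distrib]
  refine Finset.sum_congr rfl fun i _ => ?_
  set e := EuclideanSpace.single i (1:ℝ) with he
  have h1 : (fun x => fderiv ℝ (fun y => -u y) x e) = fun x => -(fderiv ℝ u x e) := by
    funext x; rw [fderiv_fun_neg]; rfl
  rw [h1, fderiv_fun_neg]; rfl

lemma partialY_neg (u : E n → ℝ) (z : E n) : partialY (fun x => -u x) z = - partialY u z := by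
  unfold partialY; rw [fderiv_fun_neg]; rfl


lemma isOpen_upper : IsOpen {z : E n | 0 < ycoord z} :=
  isOpen_lt continuous_const (YL n).continuous

lemma second_deriv_test {v : E n → ℝ} {z : E n} (hv : ContDiffAt ℝ 2 v z)
    (hmax : IsLocalMax v z) (e : E n) :
    fderiv ℝ (fun x => fderiv ℝ v x e) z e ≤ 0 := by
  by_contra hpos
  push_neg at hpos
  obtain ⟨U0, hU0, hCU0⟩ : ∃ u ∈ 𝓝 z, ContDiffOn ℝ 2 v u := hv.contDiffOn le_rfl (by simp)
  set U : Set (E n) := interior U0 with hUdef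
  have hUo : IsOpen U := isOpen_interior
  have hzU : z ∈ U := mem_interior_iff_mem_nhds.2 hU0
  have hU : ContDiffOn ℝ 2 v U := hCU0.mono interior_subset
  set L : ℝ → E n := fun t => z + t • e with hLdef
  have hL0 : L 0 = z := by simp [hLdef]
  have hLcont : Continuous L := by fun_prop
  have hLd : ∀ t, HasDerivAt L e t := by
    intro t
    have h := ((hasDerivAt_id t).smul_const e).const_add z
    simpa [hLdef] using h
  have hdiffU : ∀ x ∈ U, DifferentiableAt ℝ v x := fun x hx =>
    (hU.contDiffAt (hUo.mem_nhds hx)).differentiableAt (by norm_num)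
  set g : ℝ → ℝ := fun t => v (L t) with hgdef
  set g1 : ℝ → ℝ := fun t => fderiv ℝ v (L t) e with hg1def
  have hg : ∀ t, L t ∈ U → HasDerivAt g (g1 t) t := fun t ht =>
    ((hdiffU _ ht).hasFDerivAt.comp_hasDerivAt t (hLd t))
  set c := fderiv ℝ (fun x => fderiv ℝ v x e) z e with hcdef
  have hg1d : HasDerivAt g1 c 0 := by
    have hf : HasFDerivAt (fun x => fderiv ℝ v x e) (fderiv ℝ (fun x => fderiv ℝ v x e) z) (L 0) := by
      rw [hL0]; exact (diffAt_fderiv_apply hv e).hasFDerivAt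
    exact hf.comp_hasDerivAt 0 (hLd 0)
  have hg1_0 : g1 0 = 0 := by
    simp [hg1def, hL0, hmax.fderiv_eq_zero]
  -- slope positivity near 0
  have hslope : Tendsto (slope g1 0) (𝓝[≠] 0) (𝓝 c) := hasDerivAt_iff_tendsto_slope.1 hg1d
  have hev : ∀ᶠ t in 𝓝[≠] (0:ℝ), 0 < slope g1 0 t := hslope.eventually (eventually_gt_nhds hpos)
  rw [eventually_nhdsWithin_iff] at hev
  rw [Metric.eventually_nhds_iff] at hev
  obtain ⟨δ1, hδ1, hev1⟩ := hev
  -- L t ∈ U for small t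
  have hLU : ∀ᶠ t in 𝓝 (0:ℝ), L t ∈ U := by
    have : Tendsto L (𝓝 0) (𝓝 z) := by rw [← hL0]; exact hLcont.tendsto 0
    exact this.eventually (hUo.mem_nhds hzU)
  rw [Metric.eventually_nhds_iff] at hLU
  obtain ⟨δ2, hδ2, hev2⟩ := hLU
  -- local max
  have hgmax : ∀ᶠ t in 𝓝 (0:ℝ), g t ≤ g 0 := by
    have hTL : Tendsto L (𝓝 0) (𝓝 z) := by rw [← hL0]; exact hLcont.tendsto 0
    have := hTL.eventually hmax
    filter_upwards [this] with t ht
    simpa [hgdef, hL0] using ht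
  rw [Metric.eventually_nhds_iff] at hgmax
  obtain ⟨δ3, hδ3, hev3⟩ := hgmax
  set t0 : ℝ := (min (min δ1 δ2) δ3) / 2 with ht0def
  have ht0 : 0 < t0 := by positivity
  have ht0lt1 : t0 < δ1 := by
    have : min (min δ1 δ2) δ3 ≤ δ1 := le_trans (min_le_left _ _) (min_le_left _ _)
    linarith
  have ht0lt2 : t0 < δ2 := by
    have : min (min δ1 δ2) δ3 ≤ δ2 := le_trans (min_le_left _ _) (min_le_right _ _)
    linarith
  have ht0lt3 : t0 < δ3 := by
    have : min (min δ1 δ2) δ3 ≤ δ3 := min_le_right _ _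
    linarith
  have hIccU : ∀ s ∈ Icc (0:ℝ) t0, L s ∈ U := by
    intro s hs
    apply hev2
    rw [Real.dist_eq]
    have : |s| ≤ t0 := abs_le.2 ⟨by linarith [hs.1], hs.2⟩
    simpa using lt_of_le_of_lt this ht0lt2
  have hcontg : ContinuousOn g (Icc 0 t0) := fun s hs =>
    ((hg s (hIccU s hs)).continuousAt).continuousWithinAt
  have hdiffg : DifferentiableOn ℝ g (Ioo 0 t0) := fun s hs =>
    ((hg s (hIccU s (Ioo_subset_Icc_self hs))).differentiableAt).differentiableWithinAt
  obtain ⟨ξ, hξ, hξeq⟩ := exists_deriv_eq_slope g ht0 hcontg hdiffg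
  have hderiv : deriv g ξ = g1 ξ := (hg ξ (hIccU ξ (Ioo_subset_Icc_self hξ))).deriv
  have hg1pos : 0 < g1 ξ := by
    have h1 : 0 < slope g1 0 ξ := by
      apply hev1
      · rw [Real.dist_eq]
        have : |ξ| ≤ t0 := abs_le.2 ⟨by linarith [hξ.1], hξ.2.le⟩
        simpa using lt_of_le_of_lt this ht0lt1
      · simpa using ne_of_gt hξ.1
    have h2 : slope g1 0 ξ = g1 ξ / ξ := by simp [slope_def_field, hg1_0]
    rw [h2] at h1
    exact (div_pos_iff.1 h1).elim (fun h => h.1) (fun h => absurd h.2 (not_lt.2 hξ.1.le))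
  have hgle : g t0 ≤ g 0 := by
    apply hev3
    rw [Real.dist_eq]
    have : |t0| = t0 := abs_of_pos ht0
    rw [this] at *
    simpa [abs_of_pos ht0] using ht0lt3
  have : deriv g ξ ≤ 0 := by
    rw [hξeq]
    apply div_nonpos_of_nonpos_of_nonneg <;> linarith
  rw [hderiv] at this
  linarith


lemma no_interior_max {a : ℝ} {v : E n → ℝ} {z : E n} (hv : ContDiffAt ℝ 2 v z)
    (hz : 0 < ycoord z) (hLpos : 0 < ycoord z * lap v z + a * partialY v z) :
    ¬ IsLocalMax v z := by
  intro hmax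
  have hlap : lap v z ≤ 0 :=
    Finset.sum_nonpos fun i _ => second_deriv_test hv hmax _
  have hpY : partialY v z = 0 := by
    unfold partialY; rw [hmax.fderiv_eq_zero]; rfl
  rw [hpY] at hLpos
  nlinarith

lemma max_principle {R M : ℝ} {v : E n → ℝ}
    (hcv : ContinuousOn v {z : E n | 0 ≤ ycoord z ∧ ‖z‖ ≤ R})
    (hnomax : ∀ z ∈ Bplus n R, ¬ IsLocalMax v z)
    (hbd : ∀ z : E n, (ycoord z = 0 ∧ ‖z‖ ≤ R) ∨ (0 < ycoord z ∧ ‖z‖ = R) → v z ≤ M)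
    {z0 : E n} (hz0 : 0 ≤ ycoord z0) (hz0R : ‖z0‖ ≤ R) : v z0 ≤ M := by
  set K := {z : E n | 0 ≤ ycoord z ∧ ‖z‖ ≤ R} with hKdef
  have hKsubB : K ⊆ Metric.closedBall (0 : E n) R := by
    intro z hz
    simpa [Metric.mem_closedBall, dist_zero_right] using hz.2
  have hKclosed : IsClosed K := by
    have h1 : IsClosed {z : E n | 0 ≤ ycoord z} := isClosed_le continuous_const ycoord_continuous
    have h2 : IsClosed {z : E n | ‖z‖ ≤ R} := isClosed_le continuous_norm continuous_const
    exact h1.inter h2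
  have hKc : IsCompact K := (isCompact_closedBall (0 : E n) R).of_isClosed_subset hKclosed hKsubB
  have hne : K.Nonempty := ⟨z0, hz0, hz0R⟩
  obtain ⟨zm, hzmK, hzmmax⟩ := hKc.exists_isMaxOn hne hcv
  have hBsubK : Bplus n R ⊆ K := fun z hz => ⟨hz.1.le, hz.2.le⟩
  have hvzm : v zm ≤ M := by
    by_cases hzi : zm ∈ Bplus n R
    · exfalso
      apply hnomax zm hzi
      filter_upwards [(isOpen_Bplus R).mem_nhds hzi] with x hx
      exact hzmmax (hBsubK hx)
    · apply hbd
      have h1 : 0 ≤ ycoord zm := hzmK.1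
      have h2 : ‖zm‖ ≤ R := hzmK.2
      rcases eq_or_lt_of_le h1 with h | h
      · exact Or.inl ⟨h.symm, h2⟩
      · refine Or.inr ⟨h, ?_⟩
        by_contra hne'
        exact hzi ⟨h, lt_of_le_of_ne h2 hne'⟩
  exact le_trans (hzmmax ⟨hz0, hz0R⟩) hvzm


/-- The barrier-type function. `^ b` is real rpow, `^ 2` is the natural power. -/
def Gf (n : ℕ) (α β γ b : ℝ) (z : E n) : ℝ :=
  α * (ycoord z) ^ b + β * (∑ i, (z i)^2) + γ * (ycoord z)^2

lemma q_hasFDerivAt (x : E n) :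
    HasFDerivAt (fun z : E n => ∑ i, (z i)^2)
      (∑ j, (2 * x j) • (EuclideanSpace.proj j : E n →L[ℝ] ℝ)) x := by
  apply HasFDerivAt.fun_sum
  intro j _
  have h1 : HasFDerivAt (fun z : E n => z j) (EuclideanSpace.proj j : E n →L[ℝ] ℝ) x :=
    (EuclideanSpace.proj j : E n →L[ℝ] ℝ).hasFDerivAt
  have h2 := (hasDerivAt_pow 2 (x j)).comp_hasFDerivAt x h1
  simpa [Function.comp_def] using h2

lemma ysq_hasFDerivAt (x : E n) :
    HasFDerivAt (fun z : E n => (ycoord z)^2) ((2 * ycoord x) • YL n) x := by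
  have h1 : HasFDerivAt (fun z : E n => ycoord z) (YL n) x := (YL n).hasFDerivAt
  have h2 := (hasDerivAt_pow 2 (ycoord x)).comp_hasFDerivAt x h1
  simpa [Function.comp_def] using h2

lemma yrpow_hasFDerivAt {b : ℝ} {x : E n} (hx : 0 < ycoord x) :
    HasFDerivAt (fun z : E n => (ycoord z) ^ b) ((b * (ycoord x) ^ (b-1)) • YL n) x := by
  have h1 : HasFDerivAt (fun z : E n => ycoord z) (YL n) x := (YL n).hasFDerivAt
  exact (Real.hasDerivAt_rpow_const (p := b) (Or.inl hx.ne')).comp_hasFDerivAt x h1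

lemma Gf_hasFDerivAt (α β γ b : ℝ) {x : E n} (hx : 0 < ycoord x) :
    HasFDerivAt (Gf n α β γ b)
      ((α * (b * (ycoord x)^(b-1)) + γ * (2 * ycoord x)) • YL n
        + ∑ j, (β * (2 * x j)) • (EuclideanSpace.proj j : E n →L[ℝ] ℝ)) x := by
  have h := (((yrpow_hasFDerivAt (b := b) hx).const_mul α).add
    ((q_hasFDerivAt x).const_mul β)).add ((ysq_hasFDerivAt x).const_mul γ)
  refine h.congr_fderiv ?_
  refine ContinuousLinearMap.ext fun v => ?_
  have hs : (∑ j, (β * (2 * x j)) • (EuclideanSpace.proj j : E n →L[ℝ] ℝ)) v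
      = β * ((∑ j, (2 * x j) • (EuclideanSpace.proj j : E n →L[ℝ] ℝ)) v) := by
    rw [ContinuousLinearMap.sum_apply, ContinuousLinearMap.sum_apply, Finset.mul_sum]
    exact Finset.sum_congr rfl fun j _ => by simp; ring
  simp only [ContinuousLinearMap.add_apply, ContinuousLinearMap.smul_apply, smul_eq_mul, hs]
  ring

lemma Gf_fderiv_apply (α β γ b : ℝ) {x : E n} (hx : 0 < ycoord x) (i : Fin (n+1)) :
    fderiv ℝ (Gf n α β γ b) x (EuclideanSpace.single i 1)
      = (if i = Fin.last n then α * (b * (ycoord x)^(b-1)) + γ * (2 * ycoord x) else 0)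
        + β * (2 * x i) := by
  rw [(Gf_hasFDerivAt α β γ b hx).fderiv]
  rw [ContinuousLinearMap.add_apply, ContinuousLinearMap.smul_apply, YL_single]
  have h2 : (∑ j, (β * (2 * x j)) • (EuclideanSpace.proj j : E n →L[ℝ] ℝ))
      (EuclideanSpace.single i 1) = β * (2 * x i) := by
    rw [ContinuousLinearMap.sum_apply]
    rw [Finset.sum_eq_single i]
    · simp [proj_single]
    · intro j _ hj
      rw [ContinuousLinearMap.smul_apply, proj_single, if_neg (Ne.symm hj)]
      simp
    · intro h; exact absurd (Finset.mem_univ i) h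
  rw [h2]
  by_cases h : i = Fin.last n <;> simp [h]


lemma Gf_lap (α β γ b : ℝ) {z : E n} (hz : 0 < ycoord z) :
    lap (Gf n α β γ b) z
      = α * (b * ((b-1) * (ycoord z)^(b-2))) + β * (2 * (n+1)) + γ * 2 := by
  have hterm : ∀ i : Fin (n+1),
      fderiv ℝ (fun x => fderiv ℝ (Gf n α β γ b) x (EuclideanSpace.single i 1)) z
        (EuclideanSpace.single i 1)
      = (if i = Fin.last n then α * (b * ((b-1) * (ycoord z)^(b-2))) + γ * 2 else 0) + β * 2 := by
    intro i
    set Fi : E n → ℝ := fun x =>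
      (if i = Fin.last n then α * (b * (ycoord x)^(b-1)) + γ * (2 * ycoord x) else 0)
        + β * (2 * x i) with hFidef
    have hev : (fun x => fderiv ℝ (Gf n α β γ b) x (EuclideanSpace.single i 1)) =ᶠ[𝓝 z] Fi :=
      eventually_of_mem (isOpen_upper.mem_nhds hz) (fun x hx => Gf_fderiv_apply α β γ b hx i)
    rw [hev.fderiv_eq]
    by_cases h : i = Fin.last n
    · subst h
      have hFi : Fi = fun x : E n => (α*b) * (ycoord x)^(b-1) + (γ*2 + β*2) * ycoord x := by
        funext x
        simp only [hFidef, if_pos rfl]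
        show _ + β * (2 * ycoord x) = _
        simp only [if_true]
        ring
      have hp := yrpow_hasFDerivAt (b := b-1) (x := z) hz
      rw [show b-1-1 = b-2 by ring] at hp
      have hy : HasFDerivAt (fun x : E n => ycoord x) (YL n) z := (YL n).hasFDerivAt
      have hd := (hp.const_mul (α*b)).fun_add (hy.const_mul (γ*2 + β*2))
      rw [hFi, hd.fderiv]
      rw [if_pos rfl]
      simp only [ContinuousLinearMap.add_apply, ContinuousLinearMap.smul_apply, YL_single,
        if_pos rfl, smul_eq_mul]
      simp only [if_true]
      ring
    · have hFi : Fi = fun x : E n => (β*2) * (x i) := by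
        funext x
        simp only [hFidef, if_neg h]
        ring
      have hd : HasFDerivAt (fun x : E n => (β*2) * (x i))
          ((β*2) • (EuclideanSpace.proj i : E n →L[ℝ] ℝ)) z :=
        ((EuclideanSpace.proj i : E n →L[ℝ] ℝ).hasFDerivAt).const_mul (β*2)
      rw [hFi, hd.fderiv]
      rw [if_neg h]
      simp only [ContinuousLinearMap.smul_apply, proj_single, if_pos rfl, smul_eq_mul]
      simp only [if_true]
      ring
  unfold lap
  rw [Finset.sum_congr rfl (fun i _ => hterm i)]
  rw [Finset.sum_add_distrib]
  rw [Finset.sum_ite_eq' Finset.univ (Fin.last n)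
    (fun _ => α * (b * ((b-1) * (ycoord z)^(b-2))) + γ * 2)]
  simp [Finset.card_univ]
  ring

lemma Gf_partialY (α β γ b : ℝ) {z : E n} (hz : 0 < ycoord z) :
    partialY (Gf n α β γ b) z
      = α * (b * (ycoord z)^(b-1)) + γ * (2 * ycoord z) + β * (2 * ycoord z) := by
  unfold partialY eY
  rw [Gf_fderiv_apply α β γ b hz (Fin.last n), if_pos rfl]
  show _ + β * (2 * ycoord z) = _
  ring

lemma Gf_contDiffAt (α β γ b : ℝ) {z : E n} (hz : 0 < ycoord z) :
    ContDiffAt ℝ 2 (Gf n α β γ b) z := by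
  have h1 : ContDiffAt ℝ 2 (fun x : E n => (ycoord x) ^ b) z := by
    have ha : ContDiffAt ℝ 2 (fun t : ℝ => t ^ b) (ycoord z) :=
      Real.contDiffAt_rpow_const_of_ne hz.ne'
    exact ha.comp z ((YL n).contDiff.contDiffAt)
  have h2 : ContDiffAt ℝ 2 (fun x : E n => ∑ i, (x i)^2) z := by
    have : ContDiff ℝ 2 (fun x : E n => ∑ i, (x i)^2) :=
      ContDiff.sum fun i _ => ((EuclideanSpace.proj i : E n →L[ℝ] ℝ).contDiff).pow 2
    exact this.contDiffAt
  have h3 : ContDiffAt ℝ 2 (fun x : E n => (ycoord x)^2) z :=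
    (((YL n).contDiff).pow 2).contDiffAt
  exact ((contDiffAt_const.mul h1).add (contDiffAt_const.mul h2)).add (contDiffAt_const.mul h3)

lemma Gf_continuous (α β γ : ℝ) {b : ℝ} (hb : 0 ≤ b) : Continuous (Gf n α β γ b) := by
  have h1 : Continuous (fun x : E n => (ycoord x)^b) := by
    rw [continuous_iff_continuousAt]; intro x
    exact (Real.continuousAt_rpow_const _ _ (Or.inr hb)).comp ((YL n).continuous.continuousAt)
  have h2 : Continuous (fun x : E n => ∑ i, (x i)^2) :=
    continuous_finset_sum _ fun i _ => ((EuclideanSpace.proj i : E n →L[ℝ] ℝ).continuous).pow 2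
  have h3 : Continuous (fun x : E n => (ycoord x)^2) := ((YL n).continuous).pow 2
  exact ((continuous_const.mul h1).add (continuous_const.mul h2)).add (continuous_const.mul h3)


lemma key (n : ℕ) (a : ℝ) (ha : a ∈ Set.Ioo (-1 : ℝ) 1)
    (w : E n → ℝ)
    (hcont : ContinuousOn w {z : E n | 0 ≤ ycoord z})
    (hC2 : ContDiffOn ℝ 2 w (upperHalf n))
    (hpde : ∀ z ∈ upperHalf n, ycoord z * lap w z + a * partialY w z = 0)
    (hbdry : ∀ z : E n, ycoord z = 0 → w z = 0)
    (C : ℝ) (hC : 0 < C) (d : ℝ) (hd : d ∈ Set.Ico 0 (1 - a))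
    (hgrowth : ∀ z : E n, 0 ≤ ycoord z → |w z| ≤ C * (1 + ‖z‖ ^ d)) :
    ∀ z : E n, 0 < ycoord z → w z ≤ 0 := by
  obtain ⟨ha1, ha2⟩ := ha
  obtain ⟨hd0, hd1⟩ := hd
  intro z0 hz0
  obtain ⟨b, hbdef⟩ : ∃ b : ℝ, b = 1 - a := ⟨_, rfl⟩
  rw [← hbdef] at hd1
  have hb : 0 < b := by rw [hbdef]; linarith
  have hb2 : b ≤ 2 := by rw [hbdef]; linarith
  have h1a : (0:ℝ) < 1 + a := by linarith
  obtain ⟨AD, hADdef⟩ : ∃ AD : ℝ, AD = (n:ℝ) / (1 + a) := ⟨_, rfl⟩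
  have hAD : 0 ≤ AD := by rw [hADdef]; exact div_nonneg (Nat.cast_nonneg n) h1a.le
  have hADmul : AD * (1 + a) = (n:ℝ) := by rw [hADdef]; field_simp
  have hy0norm : ycoord z0 ≤ ‖z0‖ := le_trans (le_abs_self _) (abs_ycoord_le_norm z0)
  have hnz0 : 0 < ‖z0‖ := lt_of_lt_of_le hz0 hy0norm
  -- main estimate
  have main : ∀ R : ℝ, max ‖z0‖ 1 ≤ R →
      w z0 ≤ C * (1 + R ^ d) * (AD + 2) * (‖z0‖ / R) ^ b := by
    intro R hR
    have hRz : ‖z0‖ ≤ R := le_trans (le_max_left _ _) hR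
    have hR1 : (1:ℝ) ≤ R := le_trans (le_max_right _ _) hR
    have hRpos : (0:ℝ) < R := by linarith
    have hR2pos : (0:ℝ) < R^2 := pow_pos hRpos 2
    have hR2ne : (R:ℝ)^2 ≠ 0 := ne_of_gt hR2pos
    obtain ⟨c, hcdef⟩ : ∃ c : ℝ, c = C * (1 + R ^ d) := ⟨_, rfl⟩
    have hRd : (0:ℝ) ≤ R ^ d := Real.rpow_nonneg hRpos.le d
    have hcpos : 0 < c := by rw [hcdef]; exact mul_pos hC (by linarith)
    have step : ∀ ε : ℝ, 0 < ε → w z0 ≤ c * (AD + 2) * (‖z0‖ / R) ^ b + ε * R^2 := by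
      intro ε hε
      obtain ⟨α, hαdef⟩ : ∃ α : ℝ, α = -(c * (AD + 1) * R ^ (-b)) := ⟨_, rfl⟩
      obtain ⟨β, hβdef⟩ : ∃ β : ℝ, β = -(c / R^2) := ⟨_, rfl⟩
      obtain ⟨γ, hγdef⟩ : ∃ γ : ℝ, γ = c * (1 + AD) / R^2 + ε := ⟨_, rfl⟩
      have hβneg : β ≤ 0 := by
        rw [hβdef]
        have : 0 ≤ c / R^2 := div_nonneg hcpos.le hR2pos.le
        linarith
      have hγpos : 0 < γ := by
        rw [hγdef]
        have : 0 ≤ c * (1 + AD) / R^2 := div_nonneg (mul_nonneg hcpos.le (by linarith)) hR2pos.le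
        linarith
      have hvle : w z0 + Gf n α β γ b z0 ≤ ε * R^2 := by
        refine max_principle (v := fun z => w z + Gf n α β γ b z) ?_ ?_ ?_ hz0.le hRz
        · -- continuity
          exact ContinuousOn.add (hcont.mono (fun z hz => hz.1))
            ((Gf_continuous α β γ hb.le).continuousOn)
        · -- no interior max
          intro z hzB
          have hzu : z ∈ upperHalf n := hzB.1
          have hwAt : ContDiffAt ℝ 2 w z := hC2.contDiffAt (isOpen_upperHalf.mem_nhds hzu)
          have hGAt : ContDiffAt ℝ 2 (Gf n α β γ b) z := Gf_contDiffAt α β γ b hzB.1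
          apply no_interior_max (a := a) (hwAt.add hGAt) hzB.1
          have hy : (0:ℝ) < ycoord z := hzB.1
          have hlapv : lap (fun x => w x + Gf n α β γ b x) z
              = lap w z + lap (Gf n α β γ b) z := lap_add hwAt hGAt
          have hpYv : partialY (fun x => w x + Gf n α β γ b x) z
              = partialY w z + partialY (Gf n α β γ b) z :=
            partialY_add (hwAt.differentiableAt (by norm_num))
              (hGAt.differentiableAt (by norm_num))
          have h0 := hpde z hzu
          rw [hlapv, hpYv, Gf_lap α β γ b hy, Gf_partialY α β γ b hy]
          have hyy : ycoord z * (ycoord z) ^ (b-2) = (ycoord z) ^ (b-1) := by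
            have h := Real.rpow_add hy 1 (b-2)
            rw [Real.rpow_one] at h
            rw [show (1:ℝ) + (b-2) = b - 1 by ring] at h
            rw [← h]
          have hba : (b - 1) + a = 0 := by rw [hbdef]; ring
          have hcoef : 2*β*((n:ℝ)+1+a) + 2*γ*(1+a) = 2*ε*(1+a) := by
            calc 2*β*((n:ℝ)+1+a) + 2*γ*(1+a)
                = (2*c/R^2) * (AD*(1+a) - (n:ℝ)) + 2*ε*(1+a) := by
                  rw [hβdef, hγdef]; ring
              _ = 2*ε*(1+a) := by rw [hADmul]; ring
          have hident :
              ycoord z * (lap w z + (α * (b * ((b-1) * (ycoord z)^(b-2))) + β * (2*((n:ℝ)+1)) + γ*2))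
                + a * (partialY w z + (α*(b*(ycoord z)^(b-1)) + γ*(2*ycoord z) + β*(2*ycoord z)))
              = α*b*((ycoord z)^(b-1))*((b-1)+a)
                + ycoord z * (2*β*((n:ℝ)+1+a) + 2*γ*(1+a)) := by
            linear_combination h0 + (α*b*(b-1)) * hyy
          rw [hident, hba, hcoef]
          have hfin : 0 < ycoord z * (2*ε*(1+a)) := by
            apply mul_pos hy; nlinarith
          simpa using hfin
        · -- boundary
          intro z hcase
          rcases hcase with ⟨hy0, hzR⟩ | ⟨hy0, hzR⟩
          · have hwz : w z = 0 := hbdry z hy0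
            have hG : Gf n α β γ b z = β * ‖z‖^2 := by
              unfold Gf
              rw [hy0, Real.zero_rpow hb.ne', sum_sq_eq_norm_sq]
              ring
            show w z + Gf n α β γ b z ≤ ε * R^2
            rw [hwz, hG]
            have h1 : β * ‖z‖^2 ≤ 0 := mul_nonpos_of_nonpos_of_nonneg hβneg (sq_nonneg _)
            have h2 : 0 ≤ ε * R^2 := mul_nonneg hε.le hR2pos.le
            linarith
          · have hyR : ycoord z ≤ R :=
              le_trans (le_trans (le_abs_self _) (abs_ycoord_le_norm z)) (le_of_eq hzR)
            have hwle : w z ≤ c := by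
              have h := hgrowth z hy0.le
              rw [hzR] at h
              rw [hcdef]
              exact le_trans (le_abs_self _) h
            have hsum : (∑ i, (z i)^2) = R^2 := by rw [sum_sq_eq_norm_sq, hzR]
            show w z + Gf n α β γ b z ≤ ε * R^2
            have hG : Gf n α β γ b z = α * (ycoord z) ^ b + β * R^2 + γ * (ycoord z)^2 := by
              unfold Gf; rw [hsum]
            have hβR : β * R^2 = -c := by
              rw [hβdef, neg_mul, div_mul_cancel₀ c hR2ne]
            have hfrac0 : 0 < ycoord z / R := div_pos hy0 hRpos
            have hfrac1 : ycoord z / R ≤ 1 := (div_le_one hRpos).2 hyR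
            have hpow : (ycoord z/R) ^ (2:ℝ) ≤ (ycoord z/R) ^ b :=
              Real.rpow_le_rpow_of_exponent_ge hfrac0 hfrac1 hb2
            have h2 : (ycoord z/R) ^ (2:ℝ) = (ycoord z)^2 / R^2 := by
              rw [show ((2:ℝ)) = ((2:ℕ):ℝ) by norm_num, Real.rpow_natCast, div_pow]
            have h3 : (ycoord z/R) ^ b = (ycoord z) ^ b * R ^ (-b) := by
              rw [Real.div_rpow hy0.le hRpos.le, Real.rpow_neg hRpos.le, div_eq_mul_inv]
            have hγy : γ * (ycoord z)^2 = c * (1+AD) * ((ycoord z)^2/R^2) + ε * (ycoord z)^2 := by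
              rw [hγdef]; ring
            have hαy : α * (ycoord z) ^ b = -(c*(AD+1)) * ((ycoord z/R) ^ b) := by
              rw [hαdef, h3]; ring
            have hysq : (ycoord z)^2 ≤ R^2 := pow_le_pow_left₀ hy0.le hyR 2
            have hεy : ε * (ycoord z)^2 ≤ ε * R^2 := mul_le_mul_of_nonneg_left hysq hε.le
            have hkey : c * (1+AD) * ((ycoord z)^2/R^2) ≤ c*(AD+1) * ((ycoord z/R)^b) := by
              rw [← h2]
              have hnn : (0:ℝ) ≤ c * (1+AD) := mul_nonneg hcpos.le (by linarith)
              calc c * (1+AD) * ((ycoord z/R)^(2:ℝ))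
                  ≤ c * (1+AD) * ((ycoord z/R)^b) := mul_le_mul_of_nonneg_left hpow hnn
                _ = c * (AD+1) * ((ycoord z/R)^b) := by ring
            rw [hG, hβR, hγy, hαy]
            linarith
      -- consequence of hvle
      have hGz0 : Gf n α β γ b z0 = α * (ycoord z0)^b + β * ‖z0‖^2 + γ * (ycoord z0)^2 := by
        unfold Gf; rw [sum_sq_eq_norm_sq]
      have e1 : -(α * (ycoord z0)^b) ≤ c*(AD+1) * ((‖z0‖/R)^b) := by
        have hmono : (ycoord z0 / R) ^ b ≤ (‖z0‖/R) ^ b := by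
          apply Real.rpow_le_rpow (div_nonneg hz0.le hRpos.le) _ hb.le
          gcongr
        have h3 : (ycoord z0/R) ^ b = (ycoord z0) ^ b * R ^ (-b) := by
          rw [Real.div_rpow hz0.le hRpos.le, Real.rpow_neg hRpos.le, div_eq_mul_inv]
        have hnn : (0:ℝ) ≤ c * (AD+1) := mul_nonneg hcpos.le (by linarith)
        calc -(α * (ycoord z0)^b) = c * (AD+1) * ((ycoord z0/R) ^ b) := by
              rw [hαdef, h3]; ring
          _ ≤ c*(AD+1) * ((‖z0‖/R)^b) := mul_le_mul_of_nonneg_left hmono hnn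
      have e2 : -(β * ‖z0‖^2) ≤ c * ((‖z0‖/R)^b) := by
        have hf0 : 0 < ‖z0‖ / R := div_pos hnz0 hRpos
        have hf1 : ‖z0‖ / R ≤ 1 := (div_le_one hRpos).2 hRz
        have hpow : (‖z0‖/R) ^ (2:ℝ) ≤ (‖z0‖/R) ^ b :=
          Real.rpow_le_rpow_of_exponent_ge hf0 hf1 hb2
        have h2 : (‖z0‖/R) ^ (2:ℝ) = ‖z0‖^2 / R^2 := by
          rw [show ((2:ℝ)) = ((2:ℕ):ℝ) by norm_num, Real.rpow_natCast, div_pow]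
        calc -(β * ‖z0‖^2) = c * (‖z0‖^2/R^2) := by rw [hβdef]; ring
          _ = c * ((‖z0‖/R)^(2:ℝ)) := by rw [h2]
          _ ≤ c * ((‖z0‖/R)^b) := mul_le_mul_of_nonneg_left hpow hcpos.le
      have e3 : -(γ * (ycoord z0)^2) ≤ 0 := by
        have := mul_nonneg hγpos.le (sq_nonneg (ycoord z0))
        linarith
      have hvle' : w z0 + (α * (ycoord z0)^b + β * ‖z0‖^2 + γ * (ycoord z0)^2) ≤ ε*R^2 := by
        rw [← hGz0]; exact hvle
      have hsplit : c*(AD+2)*((‖z0‖/R)^b)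
          = c*(AD+1)*((‖z0‖/R)^b) + c*((‖z0‖/R)^b) := by ring
      linarith [hvle', e1, e2, e3, hsplit]
    -- remove ε
    rw [← hcdef]
    refine le_of_forall_pos_le_add fun ε' hε' => ?_
    have h := step (ε'/R^2) (div_pos hε' hR2pos)
    calc w z0 ≤ c * (AD + 2) * (‖z0‖ / R) ^ b + (ε'/R^2) * R^2 := h
      _ = c * (AD + 2) * (‖z0‖ / R) ^ b + ε' := by rw [div_mul_cancel₀ ε' hR2ne]
  -- limit R → ∞
  have hlim : Tendsto (fun R : ℝ => C * (1 + R ^ d) * (AD + 2) * (‖z0‖ / R) ^ b) atTop (𝓝 0) := by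
    have h1 : Tendsto (fun R : ℝ => R ^ (-b)) atTop (𝓝 0) := tendsto_rpow_neg_atTop hb
    have h2 : Tendsto (fun R : ℝ => R ^ (d - b)) atTop (𝓝 0) := by
      have h := tendsto_rpow_neg_atTop (y := b - d) (by linarith)
      have heq : ∀ R : ℝ, R ^ (-(b-d)) = R ^ (d - b) := fun R => by
        rw [show -(b-d) = d - b by ring]
      simpa [heq] using h
    have h3 : Tendsto (fun R : ℝ => (C * (AD+2) * ‖z0‖^b) * (R^(-b) + R^(d-b))) atTop (𝓝 0) := by
      have := (h1.add h2).const_mul (C * (AD+2) * ‖z0‖^b)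
      simpa using this
    apply h3.congr'
    filter_upwards [eventually_ge_atTop (1:ℝ)] with R hR1
    have hRpos : (0:ℝ) < R := by linarith
    have hRb : (0:ℝ) < R^b := Real.rpow_pos_of_pos hRpos b
    have hdb : R^(d-b) = R^d / R^b := Real.rpow_sub hRpos d b
    have hnb : R^(-b) = 1 / R^b := by rw [Real.rpow_neg hRpos.le, one_div]
    rw [Real.div_rpow (norm_nonneg _) hRpos.le, hdb, hnb]
    field_simp
  exact ge_of_tendsto hlim
    (by filter_upwards [eventually_ge_atTop (max ‖z0‖ 1)] with R hR using main R hR)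


end LiouAux

/-- Liouville-type theorem for `Δ_a w = 0` with zero boundary data and
growth `|w(z)| ≤ C(1 + |z|^d)` for some `d ∈ [0, 1-a)`, where `a ∈ (-1,1)`. -/
theorem liouville_degenerate_sublinear_growth
    (n : ℕ) (hn : 1 ≤ n) (a : ℝ) (ha : a ∈ Set.Ioo (-1 : ℝ) 1)
    (w : E n → ℝ)
    (hcont : ContinuousOn w {z : E n | 0 ≤ ycoord z})
    (hC2 : ContDiffOn ℝ 2 w (upperHalf n))
    (hpde : ∀ z ∈ upperHalf n, ycoord z * lap w z + a * partialY w z = 0)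
    (hbdry : ∀ z : E n, ycoord z = 0 → w z = 0)
    (C : ℝ) (hC : 0 < C) (d : ℝ) (hd : d ∈ Set.Ico 0 (1 - a))
    (hgrowth : ∀ z : E n, 0 ≤ ycoord z → |w z| ≤ C * (1 + ‖z‖ ^ d)) :
    ∀ z : E n, 0 ≤ ycoord z → w z = 0 := by
  intro z hz
  rcases eq_or_lt_of_le hz with h | h
  · exact hbdry z h.symm
  · have h1 : w z ≤ 0 := LiouAux.key n a ha w hcont hC2 hpde hbdry C hC d hd hgrowth z h
    have h2 : -w z ≤ 0 := by
      have := LiouAux.key n a ha (fun x => -w x) hcont.neg hC2.neg ?_ ?_ C hC d hd ?_ z h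
      · exact this
      · intro z' hz'
        rw [LiouAux.lap_neg, LiouAux.partialY_neg]
        have h0 := hpde z' hz'
        linear_combination -h0
      · intro z' hz'
        simp [hbdry z' hz']
      · intro z' hz'
        rw [abs_neg]
        exact hgrowth z' hz'
    linarith

end
end

section
/- Let n ≥ 1 and let s be a real number with n/2 < s < n. Let v be a positive C¹ function on ℝ₊^{n+1}, set ρ := v^{1/(n−s)}, and assume y·|∇ρ(z)| ≤ ρ(z) for every z ∈ ℝ₊^{n+1} (this is the condition 1 − |∇*_s ρ|²_{g*_s} ≥ 0 for the adapted metric). Define w(x,y) := 1 − v(x,y)/y^{n−s} and assume lim_{y→0⁺} w(x,y) = 0 for every x ∈ ℝⁿ. Then ∂_y w ≥ 0 everywhere on ℝ₊^{n+1}, and 0 ≤ w(z) < 1 for every z ∈ ℝ₊^{n+1}. -/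
open MeasureTheory Filter Set Topology
open scoped ENNReal NNReal

noncomputable section

lemma aux_key (n : ℕ) (s : ℝ) (hs2 : s < n)
    (v : E n → ℝ) (hpos : ∀ z ∈ upperHalf n, 0 < v z)
    (hC1 : ContDiffOn ℝ 1 v (upperHalf n))
    (hgrad : ∀ z ∈ upperHalf n,
      ycoord z * ‖gradient (fun z => (v z) ^ (1 / ((n : ℝ) - s))) z‖ ≤
        (v z) ^ (1 / ((n : ℝ) - s)))
    (w : E n → ℝ) (hw : ∀ z ∈ upperHalf n, w z = 1 - v z / (ycoord z) ^ ((n : ℝ) - s))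
    (z : E n) (hz : z ∈ upperHalf n) :
    ∃ D : E n →L[ℝ] ℝ, HasFDerivAt w D z ∧ 0 ≤ D (eY n) := by
  set N := (n:ℝ) - s with hNdef
  have hN : 0 < N := by rw [hNdef]; linarith
  have hy : 0 < ycoord z := hz
  have hvz : 0 < v z := hpos z hz
  have hopen : IsOpen (upperHalf n) := by
    have : Continuous (ycoord (n := n)) := (EuclideanSpace.proj (𝕜 := ℝ) (Fin.last n)).continuous
    exact isOpen_lt continuous_const this
  have hvd : HasFDerivAt v (fderiv ℝ v z) z :=
    (((hC1.differentiableOn one_ne_zero) z hz).differentiableAt (hopen.mem_nhds hz)).hasFDerivAt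
  set Dv := fderiv ℝ v z with hDv
  set L := EuclideanSpace.proj (𝕜 := ℝ) (Fin.last n) with hL
  have hyd : HasFDerivAt (ycoord (n := n)) L z := L.hasFDerivAt
  set y := ycoord z with hyy
  have hpow : HasFDerivAt (fun z : E n => (ycoord z) ^ (-N))
      ((-N * y ^ (-N - 1)) • L) z :=
    by have h := (Real.hasDerivAt_rpow_const (x := y) (p := -N) (Or.inl hy.ne')).comp_hasFDerivAt z hyd; exact h
  have hW : HasFDerivAt (fun z : E n => 1 - v z * (ycoord z) ^ (-N))
      (0 - (v z • ((-N * y ^ (-N - 1)) • L) + (y ^ (-N)) • Dv)) z :=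
    (hasFDerivAt_const (1:ℝ) z).sub (hvd.mul hpow)
  have heq : w =ᶠ[nhds z] fun z => 1 - v z * (ycoord z) ^ (-N) := by
    filter_upwards [hopen.mem_nhds hz] with z' hz'
    rw [hw z' hz', Real.rpow_neg (le_of_lt hz'), div_eq_mul_inv]
  have Hw := hW.congr_of_eventuallyEq heq
  refine ⟨_, Hw, ?_⟩
  have hLe : L (eY n) = 1 := by simp [eY, hL]
  set ρ := fun z : E n => (v z) ^ (1 / N) with hρdef
  have hρ : HasFDerivAt ρ ((1 / N * (v z) ^ (1 / N - 1)) • Dv) z :=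
    (Real.hasDerivAt_rpow_const (p := 1/N) (Or.inl hvz.ne')).comp_hasFDerivAt z hvd
  have hgradz : y * ‖gradient ρ z‖ ≤ (v z) ^ (1 / N) := hgrad z hz
  have hfd : fderiv ℝ ρ z (eY n) = inner ℝ (gradient ρ z) (eY n) := by
    rw [gradient]; simp [InnerProductSpace.toDual_apply_apply]
  have h1 : fderiv ℝ ρ z (eY n) ≤ ‖gradient ρ z‖ := by
    rw [hfd]
    calc inner ℝ (gradient ρ z) (eY n) ≤ ‖gradient ρ z‖ * ‖eY n‖ := real_inner_le_norm _ _
    _ = ‖gradient ρ z‖ := by simp [eY]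
  set a := fderiv ℝ ρ z (eY n) with ha
  set b := Dv (eY n) with hb'
  have hab : a = (1 / N * (v z) ^ (1 / N - 1)) * b := by
    rw [ha, hρ.fderiv]; simp [hb']
  have hya : y * a ≤ (v z) ^ (1 / N) :=
    le_trans (mul_le_mul_of_nonneg_left h1 hy.le) hgradz
  set A := (v z) ^ (1 / N - 1) with hA'
  set B := (v z) ^ (1 - 1 / N) with hB'
  set P := (v z) ^ (1 / N) with hP'
  have hA : (0:ℝ) < A := Real.rpow_pos_of_pos hvz _
  have hB : (0:ℝ) < B := Real.rpow_pos_of_pos hvz _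
  have hABone : A * B = 1 := by
    rw [hA', hB', ← Real.rpow_add hvz]
    norm_num
  have hPB : P * B = v z := by
    rw [hP', hB', ← Real.rpow_add hvz]
    have : 1 / N + (1 - 1 / N) = 1 := by ring
    rw [this, Real.rpow_one]
  have hq : (0:ℝ) < y ^ (-N) := Real.rpow_pos_of_pos hy _
  have hyp : y ^ (-N - 1) = y ^ (-N) / y := by
    rw [show (-N - 1) = -N + (-1) by ring, Real.rpow_add hy, Real.rpow_neg_one,
      div_eq_mul_inv]
  have hbval : b = N * B * a := by
    rw [hab]
    have : N * B * (1 / N * A * b) = (A * B) * b := by field_simp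
    rw [this, hABone, one_mul]
  have h2 : B * a * y ≤ v z := by
    calc B * a * y = (y * a) * B := by ring
    _ ≤ P * B := mul_le_mul_of_nonneg_right hya hB.le
    _ = v z := hPB
  have h3 : B * a ≤ v z / y := (le_div_iff₀ hy).mpr h2
  simp only [ContinuousLinearMap.sub_apply, ContinuousLinearMap.add_apply,
    ContinuousLinearMap.smul_apply, ContinuousLinearMap.zero_apply, hLe, ← hb', smul_eq_mul]
  rw [hyp, hbval]
  have hkey : 0 ≤ N * (y ^ (-N)) * (v z / y - B * a) :=
    mul_nonneg (by positivity) (sub_nonneg.mpr h3)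
  linarith [hkey, show (0:ℝ) - (v z * (-N * (y ^ (-N) / y) * 1) + y ^ (-N) * (N * B * a)) = N * (y ^ (-N)) * (v z / y - B * a) from by ring]

/-- if `v > 0`, `y|∇ρ| ≤ ρ` for `ρ = v^{1/(n-s)}` with `n/2 < s < n`, and
`w = 1 - v/y^{n-s}` vanishes on the boundary, then `∂_y w ≥ 0` and `0 ≤ w < 1`. -/
theorem monotone_in_y_direction
    (n : ℕ) (hn : 1 ≤ n) (s : ℝ) (hs1 : (n : ℝ) / 2 < s) (hs2 : s < n)
    (v : E n → ℝ) (hpos : ∀ z ∈ upperHalf n, 0 < v z)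
    (hC1 : ContDiffOn ℝ 1 v (upperHalf n))
    (hgrad : ∀ z ∈ upperHalf n,
      ycoord z * ‖gradient (fun z => (v z) ^ (1 / ((n : ℝ) - s))) z‖ ≤
        (v z) ^ (1 / ((n : ℝ) - s)))
    (w : E n → ℝ) (hw : ∀ z ∈ upperHalf n, w z = 1 - v z / (ycoord z) ^ ((n : ℝ) - s))
    (hlim : ∀ x : EuclideanSpace ℝ (Fin n),
      Tendsto (fun y => w (pt x y)) (nhdsWithin 0 (Set.Ioi 0)) (nhds 0)) :
    ∀ z ∈ upperHalf n, 0 ≤ partialY w z ∧ 0 ≤ w z ∧ w z < 1 := by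
  -- basic facts
  have hNpos : (0:ℝ) < (n:ℝ) - s := by linarith
  have key := aux_key n s hs2 v hpos hC1 hgrad w hw
  have hpart : ∀ z ∈ upperHalf n, 0 ≤ partialY w z ∧ DifferentiableAt ℝ w z := by
    intro z hz
    obtain ⟨D, hD, hD0⟩ := key z hz
    refine ⟨?_, hD.differentiableAt⟩
    rw [partialY, hD.fderiv]; exact hD0
  have hderivline : ∀ (x : EuclideanSpace ℝ (Fin n)) (t : ℝ), 0 < t →
      HasDerivAt (fun t => w (pt x t)) (partialY w (pt x t)) t := by
    intro x t ht
    have hmem : pt x t ∈ upperHalf n := by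
      show 0 < ycoord (pt x t)
      simp [ycoord, pt, Fin.snoc_last]; exact ht
    obtain ⟨D, hD, _⟩ := key (pt x t) hmem
    have hline : HasDerivAt (fun t : ℝ => pt x t) (eY n) t := by
      have hdec : (fun t : ℝ => pt x t) = fun t => pt x 0 + t • eY n := by
        funext u
        ext i
        refine Fin.lastCases ?_ ?_ i
        · simp [pt, eY, Fin.snoc_last, EuclideanSpace.single_apply]
        · intro j
          simp [pt, eY, Fin.snoc_castSucc, EuclideanSpace.single_apply,
            (Fin.castSucc_lt_last j).ne]
      rw [hdec]
      simpa using ((hasDerivAt_id t).smul_const (eY n)).const_add (pt x 0)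
    have := hD.comp_hasDerivAt t hline
    rw [partialY, hD.fderiv]
    exact this
  intro z hz
  have hy : 0 < ycoord z := hz
  have hvz : 0 < v z := hpos z hz
  refine ⟨(hpart z hz).1, ?_, ?_⟩
  · -- 0 ≤ w z via monotonicity along the vertical line and the boundary limit
    set x : EuclideanSpace ℝ (Fin n) := WithLp.toLp 2 (fun i : Fin n => z i.castSucc) with hx
    have hzeq : z = pt x (ycoord z) := by
      ext i
      refine Fin.lastCases ?_ ?_ i
      · simp [pt, ycoord, Fin.snoc_last]
      · intro j; simp [pt, hx, Fin.snoc_castSucc]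
    set f : ℝ → ℝ := fun t => w (pt x t) with hf
    have hmemt : ∀ t : ℝ, 0 < t → pt x t ∈ upperHalf n := by
      intro t ht
      show 0 < ycoord (pt x t)
      simp [ycoord, pt, Fin.snoc_last]; exact ht
    have hmono : MonotoneOn f (Ioi 0) := by
      refine monotoneOn_of_deriv_nonneg (convex_Ioi 0) ?_ ?_ ?_
      · intro t ht
        exact (hderivline x t ht).continuousAt.continuousWithinAt
      · rw [interior_Ioi]
        intro t ht
        exact (hderivline x t ht).differentiableAt.differentiableWithinAt
      · rw [interior_Ioi]
        intro t ht
        rw [(hderivline x t ht).deriv]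
        exact (hpart (pt x t) (hmemt t ht)).1
    have h0 : (0:ℝ) ≤ f (ycoord z) := by
      refine le_of_tendsto (hlim x) ?_
      filter_upwards [Ioo_mem_nhdsGT_of_mem
        (show (0:ℝ) ∈ Ico 0 (ycoord z) from ⟨le_refl 0, hy⟩)] with t ht
      exact hmono ht.1 (mem_Ioi.mpr hy) ht.2.le
    calc (0:ℝ) ≤ f (ycoord z) := h0
    _ = w z := by rw [hf]; exact congrArg w hzeq.symm
  · rw [hw z hz]
    have : 0 < v z / (ycoord z) ^ ((n:ℝ) - s) :=
      div_pos hvz (Real.rpow_pos_of_pos hy _)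
    linarith


end
end

section
/- Let n ≥ 1, let γ ∈ (0, n/2 + 1) with γ ≠ n/2, and set s := n/2 + γ and a := 1 − 2γ. Suppose v is a C² function on ℝ₊^{n+1} satisfying y²Δv(z) − (n−1)y∂_y v(z) + s(n−s)v(z) = 0 for every z ∈ ℝ₊^{n+1}. Then the function w(x,y) := 1 − v(x,y)/y^{n−s} satisfies y·Δw(z) + a·∂_y w(z) = 0 for every z ∈ ℝ₊^{n+1}, i.e. div(y^a ∇w) = 0 on ℝ₊^{n+1}. -/
open MeasureTheory Filter Set Topology
open scoped ENNReal NNReal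

noncomputable section

/-- if `-Δ₊v - s(n-s)v = 0` on the hyperbolic upper half-space, then
`w = 1 - v/y^{n-s}` satisfies the degenerate equation `yΔw + a ∂_y w = 0`, `a = 1-2γ`. -/
theorem transformed_equation_is_degenerate_elliptic
    (n : ℕ) (hn : 1 ≤ n) (γ : ℝ) (hγ : γ ∈ Set.Ioo (0 : ℝ) ((n : ℝ) / 2 + 1))
    (hγn : γ ≠ (n : ℝ) / 2)
    (s a : ℝ) (hs : s = (n : ℝ) / 2 + γ) (ha : a = 1 - 2 * γ)
    (v : E n → ℝ) (hC2 : ContDiffOn ℝ 2 v (upperHalf n))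
    (hpde : ∀ z ∈ upperHalf n,
      (ycoord z) ^ 2 * lap v z - ((n : ℝ) - 1) * ycoord z * partialY v z +
        s * ((n : ℝ) - s) * v z = 0)
    (w : E n → ℝ) (hw : ∀ z ∈ upperHalf n, w z = 1 - v z / (ycoord z) ^ ((n : ℝ) - s)) :
    ∀ z ∈ upperHalf n, ycoord z * lap w z + a * partialY w z = 0 := by
  intro z hz
  have hU : IsOpen (upperHalf n) :=
    (EuclideanSpace.proj (𝕜 := ℝ) (Fin.last n) :
      E n →L[ℝ] ℝ).continuous.isOpen_preimage _ isOpen_Ioi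
  have hy0 : 0 < ycoord z := hz
  -- v is C² at points of U
  have hvC2 : ∀ z' ∈ upperHalf n, ContDiffAt ℝ 2 v z' :=
    fun z' hz' => hC2.contDiffAt (hU.mem_nhds hz')
  have hvd : ∀ z' ∈ upperHalf n, DifferentiableAt ℝ v z' :=
    fun z' hz' => (hvC2 z' hz').differentiableAt (by norm_num)
  -- derivative of ycoord and of powers of ycoord
  have hyD : ∀ z' : E n, HasFDerivAt (ycoord (n := n))
      (EuclideanSpace.proj (𝕜 := ℝ) (Fin.last n)) z' :=
    fun z' => (EuclideanSpace.proj (𝕜 := ℝ) (Fin.last n)).hasFDerivAt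
  have hpow : ∀ p : ℝ, ∀ z' ∈ upperHalf n, HasFDerivAt (fun x : E n => ycoord x ^ p)
      ((p * ycoord z' ^ (p - 1)) • (EuclideanSpace.proj (𝕜 := ℝ) (Fin.last n))) z' :=
    fun p z' hz' => (hyD z').rpow_const (Or.inl (ne_of_gt hz'))
  -- w coincides with the explicit function near points of U
  have hwW : ∀ z' ∈ upperHalf n, w z' = 1 - v z' * ycoord z' ^ (s - (n : ℝ)) := by
    intro z' hz'
    rw [hw z' hz', show s - (n : ℝ) = -((n : ℝ) - s) by ring,
      Real.rpow_neg (le_of_lt hz'), div_eq_mul_inv]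
  -- first derivative of w on U
  have hfw : ∀ z' ∈ upperHalf n, fderiv ℝ w z' =
      -(v z' • (((s - (n : ℝ)) * ycoord z' ^ (s - (n : ℝ) - 1)) •
          (EuclideanSpace.proj (𝕜 := ℝ) (Fin.last n))) +
        (ycoord z' ^ (s - (n : ℝ))) • fderiv ℝ v z') := by
    intro z' hz'
    have hev : w =ᶠ[𝓝 z'] (fun x => 1 - v x * ycoord x ^ (s - (n : ℝ))) := by
      filter_upwards [hU.mem_nhds hz'] with t ht using hwW t ht
    have hW : HasFDerivAt (fun x => 1 - v x * ycoord x ^ (s - (n : ℝ)))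
        (-(v z' • (((s - (n : ℝ)) * ycoord z' ^ (s - (n : ℝ) - 1)) •
            (EuclideanSpace.proj (𝕜 := ℝ) (Fin.last n))) +
          (ycoord z' ^ (s - (n : ℝ))) • fderiv ℝ v z')) z' :=
      ((hvd z' hz').hasFDerivAt.mul (hpow (s - (n : ℝ)) z' hz')).const_sub 1
    rw [hev.fderiv_eq, hW.fderiv]
  -- second derivative data for v at z
  have hD2 : HasFDerivAt (fderiv ℝ v) (fderiv ℝ (fderiv ℝ v) z) z :=
    (((hvC2 z hz).fderiv_right (m := 1) (by norm_num)).differentiableAt (by norm_num)).hasFDerivAt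
  have hApp : ∀ u : E n, HasFDerivAt (fun x => fderiv ℝ v x u)
      ((ContinuousLinearMap.apply ℝ ℝ u).comp (fderiv ℝ (fderiv ℝ v) z)) z := by
    intro u
    have h := (ContinuousLinearMap.apply ℝ ℝ u).hasFDerivAt.comp z hD2
    simpa [Function.comp_def] using h
  -- notation shortcuts
  set D2 : E n →L[ℝ] E n →L[ℝ] ℝ := fderiv ℝ (fderiv ℝ v) z with hD2def
  set K : Fin (n + 1) → ℝ := fun i =>
    EuclideanSpace.proj (𝕜 := ℝ) (Fin.last n) (EuclideanSpace.single i (1 : ℝ)) with hKdef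
  -- second directional derivatives of w at z
  have hsnd : ∀ i : Fin (n + 1),
      fderiv ℝ (fun x => fderiv ℝ w x (EuclideanSpace.single i (1 : ℝ))) z
        (EuclideanSpace.single i (1 : ℝ)) =
      -(((s - (n : ℝ)) * (s - (n : ℝ) - 1) * ycoord z ^ (s - (n : ℝ) - 1 - 1) * v z) *
          (K i * K i) +
        (2 * (s - (n : ℝ)) * ycoord z ^ (s - (n : ℝ) - 1)) *
          (K i * fderiv ℝ v z (EuclideanSpace.single i (1 : ℝ))) +
        ycoord z ^ (s - (n : ℝ)) *
          D2 (EuclideanSpace.single i (1 : ℝ)) (EuclideanSpace.single i (1 : ℝ))) := by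
    intro i
    have hev2 : (fun x => fderiv ℝ w x (EuclideanSpace.single i (1 : ℝ))) =ᶠ[𝓝 z]
        (fun x => -(v x * ((s - (n : ℝ)) * ycoord x ^ (s - (n : ℝ) - 1) * K i) +
          ycoord x ^ (s - (n : ℝ)) * fderiv ℝ v x (EuclideanSpace.single i (1 : ℝ)))) := by
      filter_upwards [hU.mem_nhds hz] with t ht
      rw [hfw t ht]
      simp only [ContinuousLinearMap.neg_apply, ContinuousLinearMap.add_apply,
        ContinuousLinearMap.smul_apply, smul_eq_mul, hKdef]
    have ht1 : HasFDerivAt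
        (fun x => v x * ((s - (n : ℝ)) * ycoord x ^ (s - (n : ℝ) - 1) * K i))
        (v z • ((K i) • ((s - (n : ℝ)) •
            (((s - (n : ℝ) - 1) * ycoord z ^ (s - (n : ℝ) - 1 - 1)) •
              (EuclideanSpace.proj (𝕜 := ℝ) (Fin.last n))))) +
          ((s - (n : ℝ)) * ycoord z ^ (s - (n : ℝ) - 1) * K i) • fderiv ℝ v z) z :=
      (hvd z hz).hasFDerivAt.mul
        (((hpow (s - (n : ℝ) - 1) z hz).const_mul (s - (n : ℝ))).mul_const (K i))
    have ht2 : HasFDerivAt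
        (fun x => ycoord x ^ (s - (n : ℝ)) * fderiv ℝ v x (EuclideanSpace.single i (1 : ℝ)))
        ((ycoord z ^ (s - (n : ℝ))) •
            ((ContinuousLinearMap.apply ℝ ℝ (EuclideanSpace.single i (1 : ℝ))).comp D2) +
          (fderiv ℝ v z (EuclideanSpace.single i (1 : ℝ))) •
            (((s - (n : ℝ)) * ycoord z ^ (s - (n : ℝ) - 1)) •
              (EuclideanSpace.proj (𝕜 := ℝ) (Fin.last n)))) z :=
      (hpow (s - (n : ℝ)) z hz).mul (hApp (EuclideanSpace.single i (1 : ℝ)))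
    rw [hev2.fderiv_eq, ((ht1.fun_add ht2).fun_neg).fderiv]
    simp only [ContinuousLinearMap.neg_apply, ContinuousLinearMap.add_apply,
      ContinuousLinearMap.smul_apply, ContinuousLinearMap.comp_apply,
      ContinuousLinearMap.apply_apply, smul_eq_mul, hKdef]
    ring
  -- sum up: Laplacian of w at z
  have hS1 : (∑ i : Fin (n + 1), K i * K i) = 1 := by
    simp [hKdef, EuclideanSpace.single_apply, ite_mul, mul_ite, Finset.sum_ite_eq']
  have hS2 : (∑ i : Fin (n + 1), K i * fderiv ℝ v z (EuclideanSpace.single i (1 : ℝ)))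
      = partialY v z := by
    have h : ∀ i : Fin (n + 1), K i * fderiv ℝ v z (EuclideanSpace.single i (1 : ℝ)) =
        if i = Fin.last n then fderiv ℝ v z (EuclideanSpace.single i (1 : ℝ)) else 0 := by
      intro i
      rcases eq_or_ne i (Fin.last n) with h | h
      · simp [hKdef, h, EuclideanSpace.single_apply]
      · simp [hKdef, EuclideanSpace.single_apply, h, Ne.symm h]
    rw [Finset.sum_congr rfl fun i _ => h i, Finset.sum_ite_eq']
    simp [partialY, eY]
  have hS3 : (∑ i : Fin (n + 1),
      D2 (EuclideanSpace.single i (1 : ℝ)) (EuclideanSpace.single i (1 : ℝ))) = lap v z := by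
    refine (Finset.sum_congr rfl fun i _ => ?_).symm
    rw [(hApp (EuclideanSpace.single i (1 : ℝ))).fderiv]
    simp
  have hlapw : lap w z =
      -(((s - (n : ℝ)) * (s - (n : ℝ) - 1) * ycoord z ^ (s - (n : ℝ) - 1 - 1) * v z) +
        (2 * (s - (n : ℝ)) * ycoord z ^ (s - (n : ℝ) - 1)) * partialY v z +
        ycoord z ^ (s - (n : ℝ)) * lap v z) := by
    have : lap w z = ∑ i : Fin (n + 1),
        -(((s - (n : ℝ)) * (s - (n : ℝ) - 1) * ycoord z ^ (s - (n : ℝ) - 1 - 1) * v z) *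
            (K i * K i) +
          (2 * (s - (n : ℝ)) * ycoord z ^ (s - (n : ℝ) - 1)) *
            (K i * fderiv ℝ v z (EuclideanSpace.single i (1 : ℝ))) +
          ycoord z ^ (s - (n : ℝ)) *
            D2 (EuclideanSpace.single i (1 : ℝ)) (EuclideanSpace.single i (1 : ℝ))) :=
      Finset.sum_congr rfl fun i _ => hsnd i
    rw [this, Finset.sum_neg_distrib, Finset.sum_add_distrib, Finset.sum_add_distrib,
      ← Finset.mul_sum, ← Finset.mul_sum, ← Finset.mul_sum, hS1, hS2, hS3, mul_one]
  -- ∂_y w at z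
  have hpY : partialY w z =
      -(v z * ((s - (n : ℝ)) * ycoord z ^ (s - (n : ℝ) - 1)) +
        ycoord z ^ (s - (n : ℝ)) * partialY v z) := by
    show fderiv ℝ w z (eY n) = _
    rw [hfw z hz]
    have heY : EuclideanSpace.proj (𝕜 := ℝ) (Fin.last n) (eY n) = 1 := by
      simp [eY, EuclideanSpace.single_apply]
    simp only [ContinuousLinearMap.neg_apply, ContinuousLinearMap.add_apply,
      ContinuousLinearMap.smul_apply, smul_eq_mul, heY, mul_one, partialY]
  -- final algebra
  have hpdez := hpde z hz
  have hy0' : ycoord z ≠ 0 := ne_of_gt hy0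
  have hE1 : ycoord z ^ (s - (n : ℝ) - 1) = ycoord z ^ (s - (n : ℝ) - 1 - 1) * ycoord z := by
    rw [← Real.rpow_add_one hy0']
    congr 1
    ring
  have hE2 : ycoord z ^ (s - (n : ℝ)) =
      ycoord z ^ (s - (n : ℝ) - 1 - 1) * ycoord z * ycoord z := by
    rw [← Real.rpow_add_one hy0', ← Real.rpow_add_one hy0']
    congr 1
    ring
  have key1 : 2 * (s - (n : ℝ)) + a + ((n : ℝ) - 1) = 0 := by rw [hs, ha]; ring
  have key2 : (s - (n : ℝ)) * (s - (n : ℝ) - 1) + a * (s - (n : ℝ)) - s * ((n : ℝ) - s) = 0 := by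
    rw [hs, ha]; ring
  rw [hlapw, hpY, hE1, hE2]
  linear_combination (-(ycoord z ^ (s - (n : ℝ) - 1 - 1) * ycoord z)) * hpdez +
    (-(ycoord z ^ (s - (n : ℝ) - 1 - 1) * ycoord z * v z)) * key2 +
    (-(ycoord z ^ (s - (n : ℝ) - 1 - 1) * ycoord z * ycoord z * partialY v z)) * key1


end
end

section
/- Let ρ be a positive C¹ function on ℝ₊^{n+1} such that y·|∇ρ(z)| ≤ ρ(z) for every z ∈ ℝ₊^{n+1} and lim_{y→0⁺} ρ(x,y)/y = 1 for every x ∈ ℝⁿ. Then ρ(x,y) ≤ y for all (x,y) ∈ ℝ₊^{n+1}. -/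
open MeasureTheory Filter Set Topology
open scoped ENNReal NNReal

noncomputable section

lemma ycoord_pt {n : ℕ} (x : EuclideanSpace ℝ (Fin n)) (t : ℝ) : ycoord (pt x t) = t := by
  simp [ycoord, pt, Fin.snoc_last]

lemma pt_eq_line {n : ℕ} (x : EuclideanSpace ℝ (Fin n)) (t : ℝ) :
    pt x t = pt x 0 + t • eY n := by
  ext i
  refine Fin.lastCases ?_ (fun j => ?_) i
  · simp [pt, eY, Fin.snoc_last, EuclideanSpace.single_apply]
  · simp [pt, eY, Fin.snoc_castSucc, EuclideanSpace.single_apply,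
      (Fin.castSucc_lt_last j).ne]

lemma pt_self {n : ℕ} (z : E n) : pt (WithLp.toLp 2 (fun i => z (Fin.castSucc i))) (ycoord z) = z := by
  ext i
  refine Fin.lastCases ?_ (fun j => ?_) i
  · simp [pt, ycoord, Fin.snoc_last]
  · simp [pt, Fin.snoc_castSucc]

lemma isOpen_upperHalf (n : ℕ) : IsOpen (upperHalf n) := by
  have : upperHalf n = ycoord ⁻¹' Set.Ioi 0 := rfl
  rw [this]
  exact isOpen_Ioi.preimage (by unfold ycoord; fun_prop)

lemma norm_eY (n : ℕ) : ‖eY n‖ = 1 := by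
  simp [eY, EuclideanSpace.norm_single]


/-- if `ρ > 0` satisfies `y|∇ρ| ≤ ρ` and `lim_{y→0⁺} ρ(x,y)/y = 1`, then
`ρ(x,y) ≤ y` on the upper half-space. -/
theorem gradient_bound_implies_rho_le_y
    (n : ℕ) (hn : 1 ≤ n) (ρ : E n → ℝ)
    (hpos : ∀ z ∈ upperHalf n, 0 < ρ z)
    (hC1 : ContDiffOn ℝ 1 ρ (upperHalf n))
    (hgrad : ∀ z ∈ upperHalf n, ycoord z * ‖gradient ρ z‖ ≤ ρ z)
    (hlim : ∀ x : EuclideanSpace ℝ (Fin n),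
      Tendsto (fun y => ρ (pt x y) / y) (nhdsWithin 0 (Set.Ioi 0)) (nhds 1)) :
    ∀ z ∈ upperHalf n, ρ z ≤ ycoord z := by
  intro z hz
  set x : EuclideanSpace ℝ (Fin n) := WithLp.toLp 2 (fun i => z (Fin.castSucc i)) with hx
  set y : ℝ := ycoord z with hy
  have hy0 : 0 < y := hz
  -- membership of points on the vertical line
  have hmem : ∀ t : ℝ, 0 < t → pt x t ∈ upperHalf n := fun t ht => by
    simp only [upperHalf, Set.mem_setOf_eq, ycoord_pt]; exact ht
  -- differentiability of ρ at points of upperHalf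
  have hdiff : ∀ w ∈ upperHalf n, DifferentiableAt ℝ ρ w := fun w hw =>
    ((hC1.contDiffAt ((isOpen_upperHalf n).mem_nhds hw)).differentiableAt one_ne_zero)
  set g : ℝ → ℝ := fun t => ρ (pt x t) / t with hg
  -- derivative facts
  have hline : ∀ t : ℝ, HasDerivAt (fun s : ℝ => pt x s) (eY n) t := by
    intro t
    have : HasDerivAt (fun s : ℝ => pt x 0 + s • eY n) ((1:ℝ) • eY n) t :=
      ((hasDerivAt_id t).smul_const (eY n)).const_add (pt x 0)
    simpa [← pt_eq_line] using this
  have key : ∀ t : ℝ, 0 < t → HasDerivAt g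
      (((fderiv ℝ ρ (pt x t)) (eY n) * t - ρ (pt x t) * 1) / t ^ 2) t := by
    intro t ht
    have hd : HasDerivAt (fun s => ρ (pt x s)) ((fderiv ℝ ρ (pt x t)) (eY n)) t :=
      ((hdiff _ (hmem t ht)).hasFDerivAt).comp_hasDerivAt t (hline t)
    exact hd.div (hasDerivAt_id t) ht.ne'
  have hderiv_nonpos : ∀ t : ℝ, 0 < t → deriv g t ≤ 0 := by
    intro t ht
    rw [(key t ht).deriv]
    apply div_nonpos_of_nonpos_of_nonneg _ (sq_nonneg t)
    have h1 : (fderiv ℝ ρ (pt x t)) (eY n) ≤ ‖gradient ρ (pt x t)‖ := by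
      have : ‖gradient ρ (pt x t)‖ = ‖fderiv ℝ ρ (pt x t)‖ := by
        simp [gradient, LinearIsometryEquiv.norm_map]
      rw [this]
      calc (fderiv ℝ ρ (pt x t)) (eY n) ≤ ‖(fderiv ℝ ρ (pt x t)) (eY n)‖ := Real.le_norm_self _
        _ ≤ ‖fderiv ℝ ρ (pt x t)‖ * ‖eY n‖ := (fderiv ℝ ρ (pt x t)).le_opNorm _
        _ = ‖fderiv ℝ ρ (pt x t)‖ := by rw [norm_eY, mul_one]
    have h2 : t * ‖gradient ρ (pt x t)‖ ≤ ρ (pt x t) := by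
      have := hgrad _ (hmem t ht)
      rwa [ycoord_pt] at this
    nlinarith [h1, h2]
  -- g is antitone on (0, ∞): compare g y with g s for 0 < s < y
  have hmono : ∀ s : ℝ, 0 < s → s < y → g y ≤ g s := by
    intro s hs hsy
    have hcont : ContinuousOn g (Set.Icc s y) := fun t htm =>
      ((key t (lt_of_lt_of_le hs htm.1)).differentiableAt.continuousAt).continuousWithinAt
    have := antitoneOn_of_deriv_nonpos (convex_Icc s y) hcont
      (fun t htm => by
        rw [interior_Icc] at htm
        exact (key t (lt_trans hs htm.1)).differentiableAt.differentiableWithinAt)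
      (fun t htm => by
        rw [interior_Icc] at htm
        exact hderiv_nonpos t (lt_trans hs htm.1))
    exact this (Set.left_mem_Icc.2 hsy.le) (Set.right_mem_Icc.2 hsy.le) hsy.le
  -- take the limit s → 0⁺
  have hgy : g y ≤ 1 := by
    refine ge_of_tendsto (hlim x) ?_
    filter_upwards [Ioo_mem_nhdsGT_of_mem (Set.left_mem_Ico.2 hy0)] with s hs
    exact hmono s hs.1 hs.2
  have : ρ (pt x y) / y ≤ 1 := hgy
  rw [pt_self z] at this
  exact (div_le_one hy0).mp this

end
end
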